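/- If the gradient of the smooth Tchebycheff scalarization vanishes at x̂ and λ_i > 0 for all i, then x̂ is Pareto stationary: there exist α_i ≥ 0 with ∑α_i = 1 and ∑_i α_i ∇f_i(x̂) = 0. -/

import Mathlib

open InnerProductSpace in
theorem stch_stationary_pareto_stationary (n m : ℕ) (hm : 0 < m)
    (f : Fin m → EuclideanSpace ℝ (Fin n) → ℝ)
    (lam : Fin m → ℝ) (hlam : ∀ i, 0 < lam i) (z : Fin m → ℝ) (μ : ℝ) (hμ : 0 < μ)
    (xhat : EuclideanSpace ℝ (Fin n)) (G : Fin m → EuclideanSpace ℝ (Fin n))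
    (hG : ∀ i, HasGradientAt (f i) (G i) xhat)
    (hstat : HasGradientAt
      (fun y => μ * Real.log (∑ i, Real.exp (lam i * (f i y - z i) / μ))) 0 xhat) :
    ∃ α : Fin m → ℝ, (∀ i, 0 ≤ α i) ∧ (∑ i, α i = 1) ∧ (∑ i, α i • G i = 0) := by
  set e : Fin m → ℝ := fun i => Real.exp (lam i * (f i xhat - z i) / μ) with he
  set S : ℝ := ∑ i, e i with hS
  have hSpos : 0 < S := Finset.sum_pos (fun i _ => Real.exp_pos _) (by simp [Finset.univ_nonempty_iff, Fin.pos_iff_nonempty.mp hm])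
  set w : Fin m → ℝ := fun i => μ * (S⁻¹ * (e i * (lam i / μ))) with hw
  have hwpos : ∀ i, 0 < w i := fun i =>
    mul_pos hμ (mul_pos (inv_pos.mpr hSpos)
      (mul_pos (Real.exp_pos _) (div_pos (hlam i) hμ)))
  -- gradient of g is ∑ w i • G i
  have hgrad : HasGradientAt
      (fun y => μ * Real.log (∑ i, Real.exp (lam i * (f i y - z i) / μ)))
      (∑ i, w i • G i) xhat := by
    rw [hasGradientAt_iff_hasFDerivAt]
    have hmap : (toDual ℝ (EuclideanSpace ℝ (Fin n))) (∑ i, w i • G i)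
        = μ • (S⁻¹ • ∑ i, (e i * (lam i / μ)) • toDual ℝ (EuclideanSpace ℝ (Fin n)) (G i)) := by
      rw [map_sum, Finset.smul_sum, Finset.smul_sum]
      refine Finset.sum_congr rfl fun i _ => ?_
      rw [map_smul, smul_smul, smul_smul]
      congr 1
      show μ * (S⁻¹ * (e i * (lam i / μ))) = μ * S⁻¹ * (e i * (lam i / μ))
      ring
    rw [hmap]
    have hexp : ∀ i : Fin m, HasFDerivAt (fun y => Real.exp (lam i * (f i y - z i) / μ))
        ((e i * (lam i / μ)) • toDual ℝ (EuclideanSpace ℝ (Fin n)) (G i)) xhat := by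
      intro i
      have h1 : HasFDerivAt (fun y => lam i * (f i y - z i) / μ)
          ((lam i / μ) • toDual ℝ (EuclideanSpace ℝ (Fin n)) (G i)) xhat := by
        have h2 := ((hG i).hasFDerivAt.sub_const (z i)).const_mul (lam i / μ)
        have heq : (fun y => lam i * (f i y - z i) / μ)
            = fun y => (lam i / μ) * (f i y - z i) := by funext y; ring
        rw [heq]; exact h2
      have h3 := h1.exp
      rwa [smul_smul] at h3
    have hsum : HasFDerivAt (fun y => ∑ i, Real.exp (lam i * (f i y - z i) / μ))
        (∑ i, (e i * (lam i / μ)) • toDual ℝ (EuclideanSpace ℝ (Fin n)) (G i)) xhat :=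
      HasFDerivAt.fun_sum (fun i _ => hexp i)
    have hlog := hsum.log (ne_of_gt hSpos)
    exact hlog.const_mul μ
  have hzero : (∑ i, w i • G i) = 0 := hgrad.unique hstat
  set T : ℝ := ∑ i, w i with hT
  have hTpos : 0 < T := Finset.sum_pos (fun i _ => hwpos i) (by simp [Finset.univ_nonempty_iff, Fin.pos_iff_nonempty.mp hm])
  refine ⟨fun i => w i / T, fun i => le_of_lt (div_pos (hwpos i) hTpos), ?_, ?_⟩
  · rw [← Finset.sum_div, ← hT, div_self (ne_of_gt hTpos)]
  · have : ∑ i, (w i / T) • G i = T⁻¹ • ∑ i, w i • G i := by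
      rw [Finset.smul_sum]
      exact Finset.sum_congr rfl fun i _ => by rw [smul_smul, div_eq_inv_mul]
    rw [this, hzero, smul_zero]
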